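/- (Subadditive lemma, explicit version) Let η be a field with values in a separable Fréchet space Y that is c.a.d.i. with parameter (g,c), c.l. with parameter (t,α), and R_ℓ-invariant. Let V be an open convex neighbourhood of 0 in Y, y ∈ Y, C := y + V, and for ε ∈ (0,1) set C(y,ε) := y + (1−ε)V. For m, n ∈ ℕ* set L(m) := m + ⌈g(m)⌉ + ℓ, k_{m,n} := ⌊n/L(m)⌋ and ρ_{m,n} := 1 − k_{m,n}^d m^d / n^d. Then for every ε ∈ (0,1) there exists M(ε) such that for every m ≥ M there exists N(m,ε) such that for all n ≥ N: |Λ(n)|^{−1} log P(m_{Λ(n)} η ∈ C) ≥ |Λ(m)|^{−1} log P(m_{Λ(m)} η ∈ C(y,ε)) − c(m)/|Λ(m)| + ρ_{m,n} log α(V). -/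

import Mathlib

open MeasureTheory Filter Topology Pointwise

noncomputable section

/-- The lattice ℤ^d. -/
abbrev ZLat (d : ℕ) := Fin d → ℤ

/-- The box Λ(z;n) = z + ([0,n) ∩ ℤ)^d. -/
def box (d : ℕ) (z : ZLat d) (n : ℕ) : Finset (ZLat d) :=
  Fintype.piFinset fun k => Finset.Ico (z k) (z k + n)

/-- Sup-norm distance on ℤ^d. -/
def supdist {d : ℕ} (x y : ZLat d) : ℝ :=
  ((Finset.univ.sup fun k => (x k - y k).natAbs : ℕ) : ℝ)

/-- Configuration space Y^{ℤ^d}. -/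
abbrev Cfg (d : ℕ) (Y : Type*) := ZLat d → Y

section Defs

variable {d : ℕ} {Y : Type*}
variable [TopologicalSpace Y] [AddCommGroup Y] [Module ℝ Y] [MeasurableSpace Y]

/-- Conditions on the decoupling parameters (g, c): nonnegative, g(n)/n → 0 and
c(n)/|Λ(n)| → 0. -/
structure CadiParams (d : ℕ) (g c : ℕ → ℝ) : Prop where
  g_nonneg : ∀ n, 0 ≤ g n
  c_nonneg : ∀ n, 0 ≤ c n
  g_small : Tendsto (fun n : ℕ => g n / n) atTop (𝓝 0)
  c_small : Tendsto (fun n : ℕ => c n / (n : ℝ) ^ d) atTop (𝓝 0)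

/-- μ (the law of a field η) is convexly asymptotically decoupled from below (c.a.d.i.)
with parameter (g, c): for every box Λ(z;n), every finite S at sup-distance > g(n) from
the box, and all open convex C, D in the respective finite products,
P(η_{Λ(z;n)} ∈ C, η_S ∈ D) ≥ e^{-c(n)} P(η_{Λ(z;n)} ∈ C) P(η_S ∈ D). -/
def IsCadi (μ : Measure (Cfg d Y)) (g c : ℕ → ℝ) : Prop :=
  ∀ (z : ZLat d) (n : ℕ), 0 < n → ∀ S : Finset (ZLat d),
    (∀ x ∈ S, ∀ w ∈ box d z n, g n < supdist x w) →
    ∀ C : Set (↥(box d z n) → Y), IsOpen C → Convex ℝ C →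
    ∀ D : Set (↥S → Y), IsOpen D → Convex ℝ D →
      ENNReal.ofReal (Real.exp (-(c n))) * μ {ξ | (fun w : ↥(box d z n) => ξ w.1) ∈ C}
          * μ {ξ | (fun w : ↥S => ξ w.1) ∈ D}
        ≤ μ {ξ | (fun w : ↥(box d z n) => ξ w.1) ∈ C ∧ (fun w : ↥S => ξ w.1) ∈ D}

/-- Conditions on the local-control parameters (t, α): on open convex neighbourhoods of 0,
t takes values in (0,∞) and α in (0,1]. -/
structure ClParams (t α : Set Y → ℝ) : Prop where
  t_pos : ∀ V : Set Y, IsOpen V → Convex ℝ V → (0 : Y) ∈ V → 0 < t V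
  α_pos : ∀ V : Set Y, IsOpen V → Convex ℝ V → (0 : Y) ∈ V → 0 < α V
  α_le_one : ∀ V : Set Y, IsOpen V → Convex ℝ V → (0 : Y) ∈ V → α V ≤ 1

/-- μ (the law of a field η) is locally controlled (c.l.) with parameter (t, α):
for every open convex neighbourhood V of 0, every site z, every finite S ⊆ ℤ^d \ {z}
and every open convex D ⊆ Y^S, P(η(z) ∈ t(V)·V, η_S ∈ D) ≥ α(V) P(η_S ∈ D). -/
def IsCl (μ : Measure (Cfg d Y)) (t α : Set Y → ℝ) : Prop :=
  ∀ V : Set Y, IsOpen V → Convex ℝ V → (0 : Y) ∈ V →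
  ∀ z : ZLat d, ∀ S : Finset (ZLat d), z ∉ S →
  ∀ D : Set (↥S → Y), IsOpen D → Convex ℝ D →
    ENNReal.ofReal (α V) * μ {ξ | (fun w : ↥S => ξ w.1) ∈ D}
      ≤ μ {ξ | ξ z ∈ (t V • V : Set Y) ∧ (fun w : ↥S => ξ w.1) ∈ D}

/-- μ is invariant under the translations of the sublattice R_ℓ = (ℓℤ)^d. -/
def IsRlInv (μ : Measure (Cfg d Y)) (ℓ : ℕ) : Prop :=
  ∀ a : ZLat d, (∀ k, (ℓ : ℤ) ∣ a k) →
    Measure.map (fun ξ : Cfg d Y => fun z => ξ (z + a)) μ = μ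

/-- Empirical mean m_Λ ξ = |Λ|⁻¹ Σ_{z∈Λ} ξ(z) over a finite box. -/
def mAvg (Λ : Finset (ZLat d)) (ξ : Cfg d Y) : Y :=
  (Λ.card : ℝ)⁻¹ • ∑ z ∈ Λ, ξ z

/-- Finite-volume pressure p_Λ(λ) = |Λ|⁻¹ log E[exp λ(Σ_{z∈Λ} η(z))], valued in [-∞,+∞]. -/
def pressΛ (μ : Measure (Cfg d Y)) (Λ : Finset (ZLat d)) (l : Y →L[ℝ] ℝ) : EReal :=
  (((Λ.card : ℝ)⁻¹ : ℝ) : EReal) *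
    ENNReal.log (∫⁻ ξ, ENNReal.ofReal (Real.exp (l (∑ z ∈ Λ, ξ z))) ∂μ)

/-- Entropy s(y) = inf over open convex sets A ∋ y of
liminf_n |Λ(n)|⁻¹ log P(m_{Λ(n)} η ∈ A). -/
def entropy (μ : Measure (Cfg d Y)) (y : Y) : EReal :=
  ⨅ A ∈ {A : Set Y | IsOpen A ∧ Convex ℝ A ∧ y ∈ A},
    Filter.liminf
      (fun n : ℕ => ((((box d 0 n).card : ℝ)⁻¹ : ℝ) : EReal) *
        ENNReal.log (μ {ξ | mAvg (box d 0 n) ξ ∈ A}))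
      Filter.atTop

end Defs

set_option linter.unusedSectionVars false

section Helpers1

lemma mem_box {d : ℕ} {z : ZLat d} {n : ℕ} {x : ZLat d} :
    x ∈ box d z n ↔ ∀ k, z k ≤ x k ∧ x k < z k + n := by
  simp [box, Fintype.mem_piFinset, Finset.mem_Ico]

lemma card_box {d : ℕ} (z : ZLat d) (n : ℕ) : (box d z n).card = n ^ d := by
  rw [box, Fintype.card_piFinset]
  simp

lemma supdist_ge {d : ℕ} (x y : ZLat d) (k : Fin d) :
    ((x k - y k).natAbs : ℝ) ≤ supdist x y := by
  unfold supdist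
  exact_mod_cast Nat.cast_le.2 (Finset.le_sup (f := fun k => (x k - y k).natAbs) (Finset.mem_univ k))

section conv
variable {Y : Type*} [AddCommGroup Y] [Module ℝ Y] {V : Set Y}

lemma subconvex₂ (hV : Convex ℝ V) (h0 : (0:Y) ∈ V) {a b : ℝ} {x y : Y}
    (hx : x ∈ V) (hy : y ∈ V) (ha : 0 ≤ a) (hb : 0 ≤ b) (hab : a + b ≤ 1) :
    a • x + b • y ∈ V := by
  rcases eq_or_lt_of_le (add_nonneg ha hb) with h | h
  · have ha0 : a = 0 := by linarith
    have hb0 : b = 0 := by linarith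
    simpa [ha0, hb0] using h0
  · have hu : (a / (a+b)) • x + (b / (a+b)) • y ∈ V :=
      hV hx hy (by positivity) (by positivity) (by field_simp)
    have := hV.smul_mem_of_zero_mem h0 hu ⟨le_of_lt h, hab⟩
    rwa [smul_add, smul_smul, smul_smul, mul_div_cancel₀ _ h.ne',
      mul_div_cancel₀ _ h.ne'] at this

lemma subconvex_sum (hV : Convex ℝ V) (h0 : (0:Y) ∈ V) {ι : Type*} (s : Finset ι)
    (w : ι → ℝ) (f : ι → Y) (hw : ∀ i ∈ s, 0 ≤ w i) (hw1 : ∑ i ∈ s, w i ≤ 1)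
    (hf : ∀ i ∈ s, f i ∈ V) : ∑ i ∈ s, w i • f i ∈ V := by
  rcases eq_or_lt_of_le (Finset.sum_nonneg hw) with h | h
  · have : ∀ i ∈ s, w i = 0 :=
      (Finset.sum_eq_zero_iff_of_nonneg hw).1 h.symm
    rw [Finset.sum_congr rfl (fun i hi => by rw [this i hi, zero_smul])]
    simpa using h0
  · have key : ∑ i ∈ s, (w i / (∑ j ∈ s, w j)) • f i ∈ V := by
      apply hV.sum_mem (fun i hi => div_nonneg (hw i hi) h.le)
      · rw [← Finset.sum_div, div_self h.ne']
      · exact hf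
    have := hV.smul_mem_of_zero_mem h0 key ⟨le_of_lt h, hw1⟩
    rw [Finset.smul_sum] at this
    convert this using 2 with i hi
    rw [smul_smul, mul_div_cancel₀ _ h.ne']

lemma subconvex₃ (hV : Convex ℝ V) (h0 : (0:Y) ∈ V) {a b c : ℝ} {x y z : Y}
    (hx : x ∈ V) (hy : y ∈ V) (hz : z ∈ V) (ha : 0 ≤ a) (hb : 0 ≤ b) (hc : 0 ≤ c)
    (habc : a + b + c ≤ 1) : a • x + b • y + c • z ∈ V := by
  have := subconvex_sum hV h0 (Finset.univ : Finset (Fin 3)) ![a,b,c] ![x,y,z]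
    (by intro i _; fin_cases i <;> assumption)
    (by rw [Fin.sum_univ_three]; simpa using habc)
    (by intro i _; fin_cases i <;> assumption)
  rwa [Fin.sum_univ_three] at this

end conv

section events
variable {d : ℕ} {Y : Type*}
variable [TopologicalSpace Y] [AddCommGroup Y] [Module ℝ Y] [MeasurableSpace Y]
variable [IsTopologicalAddGroup Y] [ContinuousSMul ℝ Y]

/-- restriction with zero-extension -/
def extRestr (S T : Finset (ZLat d)) (f : ↥S → Y) : ↥T → Y :=
  fun w => if h : w.1 ∈ S then f ⟨w.1, h⟩ else 0

lemma extRestr_linear (S T : Finset (ZLat d)) : IsLinearMap ℝ (extRestr (Y := Y) S T) := by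
  constructor
  · intro f g; funext w
    by_cases h : w.1 ∈ S <;> simp [extRestr, h]
  · intro c f; funext w
    by_cases h : w.1 ∈ S <;> simp [extRestr, h]

lemma extRestr_continuous (S T : Finset (ZLat d)) : Continuous (extRestr (Y := Y) S T) := by
  apply continuous_pi
  intro w
  by_cases h : w.1 ∈ S
  · simpa [extRestr, h] using continuous_apply (A := fun _ : ↥S => Y) ⟨w.1, h⟩
  · simpa [extRestr, h] using continuous_const

lemma extRestr_restrict {S T : Finset (ZLat d)} (hTS : T ⊆ S) (ξ : Cfg d Y) :
    extRestr S T (fun w : ↥S => ξ w.1) = fun w : ↥T => ξ w.1 :=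
  funext fun w => dif_pos (hTS w.2)

/-- combined event over a union of finsets -/
def combD {ι : Type*} (J : Finset ι) (B : ι → Finset (ZLat d))
    (D : ∀ i, Set (↥(B i) → Y)) (S : Finset (ZLat d)) : Set (↥S → Y) :=
  {f | ∀ i ∈ J, extRestr S (B i) f ∈ D i}

lemma combD_isOpen {ι : Type*} (J : Finset ι) (B : ι → Finset (ZLat d))
    (D : ∀ i, Set (↥(B i) → Y)) (S : Finset (ZLat d))
    (hDo : ∀ i ∈ J, IsOpen (D i)) : IsOpen (combD J B D S) := by
  have : combD J B D S = ⋂ i ∈ J, extRestr S (B i) ⁻¹' D i := by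
    ext f; simp [combD]
  rw [this]
  exact isOpen_biInter_finset fun i hi => (hDo i hi).preimage (extRestr_continuous S (B i))

lemma combD_convex {ι : Type*} (J : Finset ι) (B : ι → Finset (ZLat d))
    (D : ∀ i, Set (↥(B i) → Y)) (S : Finset (ZLat d))
    (hDc : ∀ i ∈ J, Convex ℝ (D i)) : Convex ℝ (combD J B D S) := by
  have : combD J B D S = ⋂ i ∈ J, extRestr S (B i) ⁻¹' D i := by
    ext f; simp [combD]
  rw [this]
  exact convex_iInter₂ fun i hi => (hDc i hi).is_linear_preimage (extRestr_linear S (B i))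

lemma combD_event_eq {ι : Type*} (J : Finset ι) (B : ι → Finset (ZLat d))
    (D : ∀ i, Set (↥(B i) → Y)) (S : Finset (ZLat d)) (hBS : ∀ i ∈ J, B i ⊆ S) :
    {ξ : Cfg d Y | (fun w : ↥S => ξ w.1) ∈ combD J B D S}
      = {ξ : Cfg d Y | ∀ i ∈ J, (fun w : ↥(B i) => ξ w.1) ∈ D i} := by
  ext ξ
  simp only [Set.mem_setOf_eq, combD]
  exact forall₂_congr fun i hi => by rw [extRestr_restrict (hBS i hi)]

end events

end Helpers1

-- MEASURE HELPERS HERE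
section Helpers2
variable {d : ℕ} {Y : Type*}
variable [TopologicalSpace Y] [AddCommGroup Y] [Module ℝ Y] [MeasurableSpace Y]
variable [IsTopologicalAddGroup Y] [ContinuousSMul ℝ Y]

lemma cl_iter (μ : Measure (Cfg d Y)) (t α : Set Y → ℝ) (hcl : IsCl μ t α)
    (V : Set Y) (hVo : IsOpen V) (hVc : Convex ℝ V) (hV0 : (0:Y) ∈ V)
    (ht : t V ≠ 0) (hα : 0 ≤ α V)
    (S : Finset (ZLat d)) (D : Set (↥S → Y)) (hDo : IsOpen D) (hDc : Convex ℝ D)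
    (R : Finset (ZLat d)) (hdisj : ∀ z ∈ R, z ∉ S) :
    ENNReal.ofReal (α V ^ R.card) * μ {ξ | (fun w : ↥S => ξ w.1) ∈ D}
      ≤ μ {ξ | (∀ z ∈ R, ξ z ∈ (t V • V : Set Y)) ∧ (fun w : ↥S => ξ w.1) ∈ D} := by
  classical
  revert hdisj
  induction R using Finset.induction_on with
  | empty => intro _; simp
  | @insert z R' hz ih =>
    intro hdisj
    have hzS : z ∉ S := hdisj z (Finset.mem_insert_self z R')
    have hdisj' : ∀ z' ∈ R', z' ∉ S := fun z' hz' => hdisj z' (Finset.mem_insert_of_mem hz')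
    set S2 := S ∪ R' with hS2
    set D2 : Set (↥S2 → Y) :=
      (extRestr S2 S ⁻¹' D) ∩ ⋂ (w : ↥S2) (_ : w.1 ∈ R'), (fun f : ↥S2 → Y => f w) ⁻¹' (t V • V)
      with hD2
    have hD2o : IsOpen D2 := by
      apply IsOpen.inter (hDo.preimage (extRestr_continuous S2 S))
      exact isOpen_iInter_of_finite fun w => isOpen_iInter_of_finite fun _ =>
        (hVo.smul₀ ht).preimage (continuous_apply w)
    have hD2c : Convex ℝ D2 := by
      apply Convex.inter (hDc.is_linear_preimage (extRestr_linear S2 S))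
      exact convex_iInter fun w => convex_iInter fun _ =>
        (hVc.smul _).is_linear_preimage ⟨fun f g => rfl, fun r f => rfl⟩
    have hzS2 : z ∉ S2 := by
      simp only [hS2, Finset.mem_union]
      push_neg
      exact ⟨hzS, hz⟩
    have key := hcl V hVo hVc hV0 z S2 hzS2 D2 hD2o hD2c
    have ident1 : {ξ : Cfg d Y | (fun w : ↥S2 => ξ w.1) ∈ D2}
        = {ξ : Cfg d Y | (∀ z' ∈ R', ξ z' ∈ (t V • V : Set Y)) ∧ (fun w : ↥S => ξ w.1) ∈ D} := by
      ext ξ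
      simp only [Set.mem_setOf_eq, hD2, Set.mem_inter_iff, Set.mem_preimage, Set.mem_iInter,
        extRestr_restrict (S := S2) (T := S) (Finset.subset_union_left (s₁ := S) (s₂ := R'))]
      constructor
      · rintro ⟨h1, h2⟩
        exact ⟨fun z' hz' => h2 ⟨z', Finset.mem_union_right _ hz'⟩ hz', h1⟩
      · rintro ⟨h1, h2⟩
        exact ⟨h2, fun w hw => h1 w.1 hw⟩
    have ident2 : {ξ : Cfg d Y | ξ z ∈ (t V • V : Set Y) ∧ (fun w : ↥S2 => ξ w.1) ∈ D2}
        = {ξ : Cfg d Y | (∀ z' ∈ insert z R', ξ z' ∈ (t V • V : Set Y))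
            ∧ (fun w : ↥S => ξ w.1) ∈ D} := by
      ext ξ
      rw [Set.mem_setOf_eq, Set.mem_setOf_eq,
        show (fun w : ↥S2 => ξ w.1) ∈ D2 ↔ ξ ∈ {ξ : Cfg d Y | (fun w : ↥S2 => ξ w.1) ∈ D2} from
          Iff.rfl, ident1]
      simp only [Set.mem_setOf_eq, Finset.forall_mem_insert]
      tauto
    rw [ident1] at key
    calc ENNReal.ofReal (α V ^ (insert z R').card) * μ {ξ | (fun w : ↥S => ξ w.1) ∈ D}
        = ENNReal.ofReal (α V) *
            (ENNReal.ofReal (α V ^ R'.card) * μ {ξ | (fun w : ↥S => ξ w.1) ∈ D}) := by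
          rw [Finset.card_insert_of_notMem hz, pow_succ, ENNReal.ofReal_mul (by positivity),
            mul_assoc]
          ring_nf
      _ ≤ ENNReal.ofReal (α V) *
            μ {ξ | (∀ z' ∈ R', ξ z' ∈ (t V • V : Set Y)) ∧ (fun w : ↥S => ξ w.1) ∈ D} :=
          mul_le_mul_right (ih hdisj') _
      _ ≤ μ {ξ | ξ z ∈ (t V • V : Set Y) ∧ (fun w : ↥S2 => ξ w.1) ∈ D2} := key
      _ = _ := by rw [ident2]

lemma cadi_iter (μ : Measure (Cfg d Y)) [IsProbabilityMeasure μ] (g c : ℕ → ℝ)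
    (hcadi : IsCadi μ g c) (m : ℕ) (hm : 0 < m)
    {ι : Type} [DecidableEq ι] (J : Finset ι) (a : ι → ZLat d)
    (D : ∀ i : ι, Set (↥(box d (a i) m) → Y))
    (hDo : ∀ i, IsOpen (D i)) (hDc : ∀ i, Convex ℝ (D i))
    (hsep : ∀ i ∈ J, ∀ i' ∈ J, i ≠ i' →
      ∀ x ∈ box d (a i) m, ∀ w ∈ box d (a i') m, g m < supdist x w) :
    ENNReal.ofReal (Real.exp (-(J.card * c m)))
        * ∏ i ∈ J, μ {ξ | (fun w : ↥(box d (a i) m) => ξ w.1) ∈ D i}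
      ≤ μ {ξ | ∀ i ∈ J, (fun w : ↥(box d (a i) m) => ξ w.1) ∈ D i} := by
  classical
  revert hsep
  induction J using Finset.induction_on with
  | empty => intro _; simp
  | @insert i₀ J' hi₀ ih =>
    intro hsep
    have hsep' : ∀ i ∈ J', ∀ i' ∈ J', i ≠ i' →
        ∀ x ∈ box d (a i) m, ∀ w ∈ box d (a i') m, g m < supdist x w :=
      fun i hi i' hi' => hsep i (Finset.mem_insert_of_mem hi) i' (Finset.mem_insert_of_mem hi')
    set Bx : ι → Finset (ZLat d) := fun i => box d (a i) m with hBx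
    set S := J'.biUnion Bx with hS
    have hdist : ∀ x ∈ S, ∀ w ∈ box d (a i₀) m, g m < supdist x w := by
      intro x hx w hw
      obtain ⟨i, hi, hxi⟩ := Finset.mem_biUnion.1 hx
      exact hsep i (Finset.mem_insert_of_mem hi) i₀ (Finset.mem_insert_self _ _)
        (fun h => hi₀ (h ▸ hi)) x hxi w hw
    have hBS : ∀ i ∈ J', Bx i ⊆ S := fun i hi => Finset.subset_biUnion_of_mem Bx hi
    have key := hcadi (a i₀) m hm S hdist (D i₀) (hDo i₀) (hDc i₀)
      (combD J' Bx D S) (combD_isOpen J' Bx D S fun i _ => hDo i)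
      (combD_convex J' Bx D S fun i _ => hDc i)
    have ident1 := combD_event_eq J' Bx D S hBS
    have ident2 : {ξ : Cfg d Y | (fun w : ↥(box d (a i₀) m) => ξ w.1) ∈ D i₀
          ∧ (fun w : ↥S => ξ w.1) ∈ combD J' Bx D S}
        = {ξ : Cfg d Y | ∀ i ∈ insert i₀ J', (fun w : ↥(box d (a i) m) => ξ w.1) ∈ D i} := by
      ext ξ
      rw [Set.mem_setOf_eq,
        show ((fun w : ↥S => ξ w.1) ∈ combD J' Bx D S) ↔
          ξ ∈ {ξ : Cfg d Y | (fun w : ↥S => ξ w.1) ∈ combD J' Bx D S} from Iff.rfl, ident1]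
      simp only [Set.mem_setOf_eq, Finset.forall_mem_insert]
      exact Iff.rfl
    calc ENNReal.ofReal (Real.exp (-((insert i₀ J').card * c m)))
          * ∏ i ∈ insert i₀ J', μ {ξ | (fun w : ↥(box d (a i) m) => ξ w.1) ∈ D i}
        = ENNReal.ofReal (Real.exp (-(c m)))
            * μ {ξ | (fun w : ↥(box d (a i₀) m) => ξ w.1) ∈ D i₀}
            * (ENNReal.ofReal (Real.exp (-(J'.card * c m)))
              * ∏ i ∈ J', μ {ξ | (fun w : ↥(box d (a i) m) => ξ w.1) ∈ D i}) := by
          rw [Finset.card_insert_of_notMem hi₀, Finset.prod_insert hi₀]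
          rw [show ((((J'.card + 1 : ℕ)) : ℝ)) = (J'.card : ℝ) + 1 by push_cast; ring,
            show (-(((J'.card : ℝ) + 1) * c m)) = (-(c m)) + (-(J'.card * c m)) by ring,
            Real.exp_add, ENNReal.ofReal_mul (Real.exp_nonneg _)]
          ring
      _ ≤ ENNReal.ofReal (Real.exp (-(c m)))
            * μ {ξ | (fun w : ↥(box d (a i₀) m) => ξ w.1) ∈ D i₀}
            * μ {ξ | ∀ i ∈ J', (fun w : ↥(box d (a i) m) => ξ w.1) ∈ D i} :=
          mul_le_mul_right (ih hsep') _
      _ = ENNReal.ofReal (Real.exp (-(c m)))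
            * μ {ξ | (fun w : ↥(box d (a i₀) m) => ξ w.1) ∈ D i₀}
            * μ {ξ | (fun w : ↥S => ξ w.1) ∈ combD J' Bx D S} := by rw [ident1]
      _ ≤ μ {ξ | (fun w : ↥(box d (a i₀) m) => ξ w.1) ∈ D i₀
            ∧ (fun w : ↥S => ξ w.1) ∈ combD J' Bx D S} := key
      _ = _ := by rw [ident2]

lemma box_translate (m : ℕ) (a : ZLat d) :
    box d a m = (box d 0 m).map (addRightEmbedding a) := by
  ext x
  simp only [Finset.mem_map, addRightEmbedding_apply, mem_box, Pi.zero_apply, zero_add]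
  constructor
  · intro h
    exact ⟨x - a, fun k => by have := h k; simp [Pi.sub_apply]; omega, by abel⟩
  · rintro ⟨w, hw, rfl⟩
    intro k
    have := hw k
    simp [Pi.add_apply]
    omega

lemma avg_translate [SecondCountableTopology Y] [BorelSpace Y]
    (μ : Measure (Cfg d Y)) (ℓ : ℕ) (hinv : IsRlInv μ ℓ) (a : ZLat d)
    (ha : ∀ k, (ℓ : ℤ) ∣ a k) (m : ℕ) (C' : Set Y) (hC' : MeasurableSet C') :
    μ {ξ | mAvg (box d a m) ξ ∈ C'} = μ {ξ | mAvg (box d 0 m) ξ ∈ C'} := by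
  set T : Cfg d Y → Cfg d Y := fun ξ => fun z => ξ (z + a) with hT
  have hTm : Measurable T := measurable_pi_lambda _ fun z => measurable_pi_apply _
  have hsum : Measurable fun ξ : Cfg d Y => ∑ z ∈ box d 0 m, ξ z :=
    Finset.measurable_sum _ fun z _ => measurable_pi_apply z
  have hmeas : Measurable fun ξ : Cfg d Y => mAvg (box d 0 m) ξ :=
    ((continuous_const_smul (((box d 0 m).card : ℝ)⁻¹)).measurable).comp hsum
  have hset : MeasurableSet {ξ : Cfg d Y | mAvg (box d 0 m) ξ ∈ C'} := hmeas hC'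
  have hpre : T ⁻¹' {ξ : Cfg d Y | mAvg (box d 0 m) ξ ∈ C'}
      = {ξ : Cfg d Y | mAvg (box d a m) ξ ∈ C'} := by
    ext ξ
    simp only [Set.mem_preimage, Set.mem_setOf_eq]
    have : mAvg (box d 0 m) (T ξ) = mAvg (box d a m) ξ := by
      unfold mAvg
      rw [box_translate m a, Finset.sum_map, Finset.card_map]
      rfl
    rw [this]
  calc μ {ξ | mAvg (box d a m) ξ ∈ C'}
      = μ (T ⁻¹' {ξ : Cfg d Y | mAvg (box d 0 m) ξ ∈ C'}) := by rw [hpre]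
    _ = (Measure.map T μ) {ξ : Cfg d Y | mAvg (box d 0 m) ξ ∈ C'} :=
        (Measure.map_apply hTm hset).symm
    _ = μ {ξ | mAvg (box d 0 m) ξ ∈ C'} := by rw [hinv a ha]

def gridPt (L ℓ k : ℕ) {d : ℕ} (j : Fin d → Fin k) : ZLat d :=
  fun i => ((ℓ * ((L * (j i : ℕ) + (ℓ - 1)) / ℓ) : ℕ) : ℤ)

lemma gridPt_dvd (L ℓ k : ℕ) {d : ℕ} (j : Fin d → Fin k) (i : Fin d) :
    (ℓ : ℤ) ∣ gridPt L ℓ k j i := by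
  unfold gridPt
  exact_mod_cast Int.natCast_dvd_natCast.2 (Dvd.intro _ rfl)

lemma gridPt_bounds (L ℓ k : ℕ) (hℓ : 0 < ℓ) {d : ℕ} (j : Fin d → Fin k) (i : Fin d) :
    (L * (j i : ℕ) : ℤ) ≤ gridPt L ℓ k j i ∧ gridPt L ℓ k j i ≤ (L * (j i : ℕ) + (ℓ - 1) : ℕ) := by
  have h1 := Nat.div_add_mod (L * (j i : ℕ) + (ℓ - 1)) ℓ
  have h2 := Nat.mod_lt (L * (j i : ℕ) + (ℓ - 1)) hℓ
  unfold gridPt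
  constructor <;> [skip; skip] <;> exact_mod_cast by omega

lemma grid_box_sub (G m ℓ n k : ℕ) (hℓ : 0 < ℓ) (hk : 1 ≤ k)
    (hkL : k * (m + G + ℓ) ≤ n) {d : ℕ} (j : Fin d → Fin k) :
    box d (gridPt (m + G + ℓ) ℓ k j) m ⊆ box d 0 n := by
  set L' := m + G + ℓ with hL'
  intro x hx
  rw [mem_box] at hx ⊢
  intro i
  obtain ⟨hg1, hg2⟩ := gridPt_bounds L' ℓ k hℓ j i
  obtain ⟨hx1, hx2⟩ := hx i
  have h3 : ((j i : ℕ) : ℤ) + 1 ≤ (k : ℤ) := by exact_mod_cast (j i).2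
  have h4 : (L' : ℤ) * (((j i : ℕ) : ℤ) + 1) ≤ (L' : ℤ) * k :=
    mul_le_mul_of_nonneg_left h3 (by positivity)
  have h5 : ((k : ℤ)) * L' ≤ n := by exact_mod_cast hkL
  have hc : ((L' * (j i : ℕ) + (ℓ - 1) : ℕ) : ℤ)
      = (L' : ℤ) * ((j i : ℕ) : ℤ) + ((ℓ : ℤ) - 1) := by
    push_cast [Nat.cast_sub hℓ]
    ring
  have hLval : (L' : ℤ) = (m : ℤ) + G + ℓ := by rw [hL']; push_cast; ring
  have hnn : (0 : ℤ) ≤ (L' : ℤ) * ((j i : ℕ) : ℤ) := by positivity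
  rw [hc] at hg2
  simp only [Pi.zero_apply, zero_add]
  constructor
  · linarith
  · linarith

lemma grid_sep (G m ℓ k : ℕ) (hℓ : 0 < ℓ) {d : ℕ} (j j' : Fin d → Fin k) (hne : j ≠ j')
    (x w : ZLat d) (hx : x ∈ box d (gridPt (m + G + ℓ) ℓ k j) m)
    (hw : w ∈ box d (gridPt (m + G + ℓ) ℓ k j') m) :
    (G : ℝ) + 1 ≤ supdist x w := by
  set L' := m + G + ℓ with hL'
  obtain ⟨i, hi⟩ := Function.ne_iff.1 hne
  rw [mem_box] at hx hw
  obtain ⟨hx1, hx2⟩ := hx i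
  obtain ⟨hw1, hw2⟩ := hw i
  obtain ⟨hgj1, hgj2⟩ := gridPt_bounds L' ℓ k hℓ j i
  obtain ⟨hgj'1, hgj'2⟩ := gridPt_bounds L' ℓ k hℓ j' i
  have hc : ∀ p : ℕ, ((L' * p + (ℓ - 1) : ℕ) : ℤ) = (L' : ℤ) * (p : ℤ) + ((ℓ : ℤ) - 1) := by
    intro p; push_cast [Nat.cast_sub hℓ]; ring
  rw [hc] at hgj2; rw [hc] at hgj'2
  have hLval : (L' : ℤ) = (m : ℤ) + G + ℓ := by rw [hL']; push_cast; ring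
  have key : (G : ℤ) + 1 ≤ (x i - w i).natAbs := by
    have habs : |x i - w i| = ((x i - w i).natAbs : ℤ) := (Int.abs_eq_natAbs _)
    rcases lt_or_gt_of_ne (fun h : (j i : ℕ) = (j' i : ℕ) => hi (Fin.ext h)) with h | h
    · -- j i < j' i : w i is far above x i
      have h4 : (L' : ℤ) * (((j i : ℕ) : ℤ) + 1) ≤ (L' : ℤ) * ((j' i : ℕ) : ℤ) :=
        mul_le_mul_of_nonneg_left (by exact_mod_cast h) (by positivity)
      have : (G : ℤ) + 1 ≤ w i - x i := by linarith
      have h6 : w i - x i ≤ |x i - w i| := by rw [abs_sub_comm]; exact le_abs_self _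
      omega
    · have h4 : (L' : ℤ) * (((j' i : ℕ) : ℤ) + 1) ≤ (L' : ℤ) * ((j i : ℕ) : ℤ) :=
        mul_le_mul_of_nonneg_left (by exact_mod_cast h) (by positivity)
      have : (G : ℤ) + 1 ≤ x i - w i := by linarith
      have h6 : x i - w i ≤ |x i - w i| := le_abs_self _
      omega
  have key2 : (G : ℝ) + 1 ≤ ((x i - w i).natAbs : ℝ) := by exact_mod_cast key
  exact key2.trans (supdist_ge x w i)

lemma supdist_self {d : ℕ} (x : ZLat d) : supdist x x = 0 := by
  unfold supdist
  norm_cast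
  simp

set_option maxHeartbeats 1000000 in
lemma geom_incl {ι : Type} [Fintype ι] [DecidableEq ι]
    (V : Set Y) (hVc : Convex ℝ V) (hV0 : (0:Y) ∈ V) (y : Y)
    (ε σ tv : ℝ) (hε : 0 < ε) (hε1 : ε < 1) (hσ : 0 < σ) (hσy : σ • (-y) ∈ V)
    (htv : 0 < tv) (n m : ℕ) (hn : 0 < n) (hm : 0 < m)
    (B : ι → Finset (ZLat d))
    (hUsub : (Finset.univ.biUnion B) ⊆ box d 0 n)
    (hdisjB : ((Finset.univ : Finset ι) : Set ι).PairwiseDisjoint B)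
    (hBcard : ∀ j, ((B j).card : ℝ) = (m : ℝ) ^ d)
    (hK : 0 < Fintype.card ι)
    (hRpos : 0 < ((box d 0 n) \ Finset.univ.biUnion B).card)
    (hRcard : ((((box d 0 n) \ Finset.univ.biUnion B).card : ℕ) : ℝ)
      = (n : ℝ) ^ d - (Fintype.card ι) * (m : ℝ) ^ d)
    (hcond : (((((box d 0 n) \ Finset.univ.biUnion B).card : ℕ) : ℝ) / (n : ℝ) ^ d)
        * (tv + 1 / σ) ≤ ε)
    (ξ : Cfg d Y)
    (hblocks : ∀ j : ι, mAvg (B j) ξ ∈ (fun v => y + v) '' ((1 - ε) • V))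
    (hrest : ∀ z ∈ (box d 0 n) \ Finset.univ.biUnion B, ξ z ∈ (tv • V : Set Y)) :
    mAvg (box d 0 n) ξ ∈ (fun v => y + v) '' V := by
  classical
  set U := Finset.univ.biUnion B with hU
  set Rst := box d 0 n \ U with hRst
  set K := Fintype.card ι with hKdef
  -- choices
  have hbl : ∀ j, ∃ v ∈ V, y + (1 - ε) • v = mAvg (B j) ξ := by
    intro j
    obtain ⟨u, hu, hyu⟩ := hblocks j
    obtain ⟨v, hv, rfl⟩ := hu
    exact ⟨v, hv, hyu⟩
  choose v hv hveq using hbl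
  have hw : ∀ z ∈ Rst, ∃ wv ∈ V, tv • wv = ξ z := fun z hz =>
    Set.mem_smul_set.1 (hrest z hz)
  set w' : ZLat d → Y := fun z => if hz : z ∈ Rst then (hw z hz).choose else 0 with hw'
  have hww : ∀ z ∈ Rst, w' z ∈ V ∧ tv • w' z = ξ z := by
    intro z hz
    simp only [hw', dif_pos hz]
    exact ⟨(hw z hz).choose_spec.1, (hw z hz).choose_spec.2⟩
  set SA := ∑ j : ι, v j with hSA
  set SW := ∑ z ∈ Rst, w' z with hSW
  -- sums over blocks
  have hmd : ((m : ℝ) ^ d) ≠ 0 := by positivity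
  have hnd : ((n : ℝ) ^ d) ≠ 0 := by positivity
  have hBsum : ∀ j, ∑ z ∈ B j, ξ z = ((m : ℝ) ^ d) • (y + (1 - ε) • v j) := by
    intro j
    have h := hveq j
    unfold mAvg at h
    rw [hBcard j] at h
    rw [h, smul_inv_smul₀ hmd]
  have hRsum : ∑ z ∈ Rst, ξ z = tv • SW := by
    rw [hSW, Finset.smul_sum]
    exact Finset.sum_congr rfl fun z hz => ((hww z hz).2).symm
  have htot : ∑ z ∈ box d 0 n, ξ z
      = tv • SW + ((K * (m : ℝ) ^ d)) • y + ((1 - ε) * (m : ℝ) ^ d) • SA := by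
    calc ∑ z ∈ box d 0 n, ξ z = (∑ z ∈ Rst, ξ z) + ∑ z ∈ U, ξ z :=
          (Finset.sum_sdiff hUsub).symm
      _ = tv • SW + ∑ j : ι, ∑ z ∈ B j, ξ z := by rw [hRsum, hU, Finset.sum_biUnion hdisjB]
      _ = tv • SW + ∑ j : ι, ((m : ℝ) ^ d) • (y + (1 - ε) • v j) := by
          rw [Finset.sum_congr rfl fun j _ => hBsum j]
      _ = _ := by
          rw [Finset.sum_congr rfl (fun j (_ : j ∈ Finset.univ) =>
              (by rw [smul_add, smul_smul, mul_comm] :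
                ((m : ℝ) ^ d) • (y + (1 - ε) • v j)
                  = ((m : ℝ) ^ d) • y + ((1 - ε) * (m : ℝ) ^ d) • v j)),
            Finset.sum_add_distrib, Finset.sum_const, Finset.card_univ, ← hKdef,
            ← Nat.cast_smul_eq_nsmul ℝ K, smul_smul, ← Finset.smul_sum, ← hSA, add_assoc]
  -- representation
  have hRne : ((Rst.card : ℕ) : ℝ) ≠ 0 := Nat.cast_ne_zero.2 hRpos.ne'
  have hKne : ((K : ℕ) : ℝ) ≠ 0 := Nat.cast_ne_zero.2 hK.ne'
  have hr0 : (0:ℝ) ≤ ((Rst.card : ℕ) : ℝ) / (n : ℝ) ^ d := by positivity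
  have hr1 : ((Rst.card : ℕ) : ℝ) / (n : ℝ) ^ d ≤ 1 := by
    rw [div_le_one (by positivity), hRcard]
    have : 0 ≤ (K : ℝ) * (m : ℝ) ^ d := by positivity
    linarith
  have hrep : mAvg (box d 0 n) ξ - y
      = ((1 - ε) * ((K * (m : ℝ) ^ d) / (n : ℝ) ^ d)) • (((K : ℕ) : ℝ)⁻¹ • SA)
        + (tv * (((Rst.card : ℕ) : ℝ) / (n : ℝ) ^ d)) • (((Rst.card : ℕ) : ℝ)⁻¹ • SW)
        + (((((Rst.card : ℕ) : ℝ) / (n : ℝ) ^ d)) / σ) • (σ • (-y)) := by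
    unfold mAvg
    rw [card_box, htot]
    match_scalars
    all_goals push_cast
    · field_simp
    · rw [hRcard]; field_simp; ring
    · field_simp
  have hA : ((K : ℕ) : ℝ)⁻¹ • SA ∈ V := by
    rw [hSA, Finset.smul_sum]
    refine subconvex_sum hVc hV0 _ _ _ (fun j _ => inv_nonneg.2 (Nat.cast_nonneg _)) ?_ fun j _ => hv j
    rw [Finset.sum_const, Finset.card_univ, nsmul_eq_mul, ← hKdef, mul_inv_cancel₀ hKne]
  have hW : ((Rst.card : ℕ) : ℝ)⁻¹ • SW ∈ V := by
    rw [hSW, Finset.smul_sum]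
    refine subconvex_sum hVc hV0 _ _ _ (fun z _ => inv_nonneg.2 (Nat.cast_nonneg _)) ?_ fun z hz => (hww z hz).1
    rw [Finset.sum_const, nsmul_eq_mul, mul_inv_cancel₀ hRne]
  have h1 : (↑K * (m : ℝ) ^ d) / (n : ℝ) ^ d = 1 - ((Rst.card : ℕ) : ℝ) / (n : ℝ) ^ d := by
    rw [hRcard]; field_simp; ring
  have h2 : tv * (((Rst.card : ℕ) : ℝ) / (n : ℝ) ^ d)
      + ((((Rst.card : ℕ) : ℝ) / (n : ℝ) ^ d)) / σ
      = (((Rst.card : ℕ) : ℝ) / (n : ℝ) ^ d) * (tv + 1 / σ) := by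
    field_simp
  have hsum1 : ((1 - ε) * ((K * (m : ℝ) ^ d) / (n : ℝ) ^ d))
      + (tv * (((Rst.card : ℕ) : ℝ) / (n : ℝ) ^ d))
      + (((((Rst.card : ℕ) : ℝ) / (n : ℝ) ^ d)) / σ) ≤ 1 := by
    rw [h1]
    nlinarith [mul_nonneg (by linarith : (0:ℝ) ≤ 1 - ε) hr0, hcond, h2]
  have hmem : mAvg (box d 0 n) ξ - y ∈ V := by
    rw [hrep]
    exact subconvex₃ hVc hV0 hA hW hσy
      (mul_nonneg (by linarith) (by positivity))
      (mul_nonneg htv.le (by positivity))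
      (div_nonneg (by positivity) hσ.le)
      hsum1
  exact ⟨mAvg (box d 0 n) ξ - y, hmem, by
    show y + (mAvg (box d 0 n) ξ - y) = mAvg (box d 0 n) ξ
    abel⟩


end Helpers2


variable {Y : Type*} [AddCommGroup Y] [Module ℝ Y] [UniformSpace Y] [IsUniformAddGroup Y]
  [ContinuousSMul ℝ Y] [LocallyConvexSpace ℝ Y] [CompleteSpace Y]
  [TopologicalSpace.SeparableSpace Y] [TopologicalSpace.MetrizableSpace Y]
  [MeasurableSpace Y] [BorelSpace Y]

/-- L(m) = m + ⌈g(m)⌉ + ℓ. -/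
def Lspacing (g : ℕ → ℝ) (ℓ m : ℕ) : ℕ := m + ⌈g m⌉₊ + ℓ

/-- k_{m,n} = ⌊n / L(m)⌋. -/
def kmn (g : ℕ → ℝ) (ℓ m n : ℕ) : ℕ := n / Lspacing g ℓ m

/-- ρ_{m,n} = 1 - k_{m,n}^d m^d / n^d. -/
def rhomn (d : ℕ) (g : ℕ → ℝ) (ℓ m n : ℕ) : ℝ :=
  1 - ((kmn g ℓ m n : ℝ) ^ d * (m : ℝ) ^ d) / (n : ℝ) ^ d

set_option maxHeartbeats 2000000 in
/-- subadditive lemma, explicit version: with C = y + V and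
C(y,ε) = y + (1-ε)V, for every ε ∈ (0,1) there is M(ε) such that for all m ≥ M there is
N(m,ε) such that for n ≥ N,
|Λ(n)|⁻¹ log P(m_{Λ(n)} η ∈ C)
  ≥ |Λ(m)|⁻¹ log P(m_{Λ(m)} η ∈ C(y,ε)) - c(m)/|Λ(m)| + ρ_{m,n} log α(V). -/
theorem subadditive_lemma_explicit {d : ℕ} (hd : 0 < d)
    (μ : Measure (Cfg d Y)) [IsProbabilityMeasure μ]
    (g c : ℕ → ℝ) (hgc : CadiParams d g c) (hcadi : IsCadi μ g c)
    (t α : Set Y → ℝ) (htα : ClParams t α) (hcl : IsCl μ t α)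
    (ℓ : ℕ) (hℓ : 0 < ℓ) (hinv : IsRlInv μ ℓ)
    (V : Set Y) (hVo : IsOpen V) (hVc : Convex ℝ V) (hV0 : (0 : Y) ∈ V) (y : Y) :
    ∀ ε ∈ Set.Ioo (0 : ℝ) 1, ∃ M : ℕ, ∀ m ≥ M, ∃ N : ℕ, ∀ n ≥ N,
      ((((box d 0 m).card : ℝ)⁻¹ : ℝ) : EReal) *
          ENNReal.log (μ {ξ | mAvg (box d 0 m) ξ ∈ (fun v => y + v) '' ((1 - ε) • V)})
          + (((- c m / ((box d 0 m).card : ℝ)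
              + rhomn d g ℓ m n * Real.log (α V)) : ℝ) : EReal)
        ≤ ((((box d 0 n).card : ℝ)⁻¹ : ℝ) : EReal) *
            ENNReal.log (μ {ξ | mAvg (box d 0 n) ξ ∈ (fun v => y + v) '' V}) := by
    classical
  intro ε hε
  obtain ⟨hε0, hε1⟩ := hε
  haveI hsc : SecondCountableTopology Y := by
    letI pm : PseudoMetricSpace Y := TopologicalSpace.pseudoMetrizableSpacePseudoMetric Y
    exact @UniformSpace.secondCountable_of_separable Y pm.toUniformSpace
      inferInstance inferInstance
  have htV : 0 < t V := htα.t_pos V hVo hVc hV0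
  have hα0 : 0 < α V := htα.α_pos V hVo hVc hV0
  have hα1 : α V ≤ 1 := htα.α_le_one V hVo hVc hV0
  -- choose σ with σ • (-y) ∈ V
  obtain ⟨σ, hσ, hσy⟩ : ∃ σ : ℝ, 0 < σ ∧ σ • (-y) ∈ V := by
    have hcont : Continuous fun s : ℝ => s • (-y) := continuous_id.smul continuous_const
    have hten : Tendsto (fun s : ℝ => s • (-y)) (𝓝 0) (𝓝 (0 : Y)) := by
      have := hcont.tendsto 0
      simpa using this
    have hev0 : {s : ℝ | s • (-y) ∈ V} ∈ 𝓝 (0 : ℝ) := hten (hVo.mem_nhds hV0)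
    obtain ⟨δ₀, hδ₀pos, hδ₀⟩ := Metric.mem_nhds_iff.1 hev0
    refine ⟨δ₀ / 2, by positivity, hδ₀ ?_⟩
    simp only [Metric.mem_ball, Real.dist_eq, sub_zero]
    rw [abs_of_pos (by positivity)]
    linarith
  set s₁ : ℝ := min (ε / (t V + 1 / σ)) 1 with hs₁def
  have hs₁pos : 0 < s₁ := lt_min (by positivity) one_pos
  have hs₁le1 : s₁ ≤ 1 := min_le_right _ _
  set δ : ℝ := s₁ / 2 with hδdef
  have hδpos : 0 < δ := by positivity
  have hδhalf : δ ≤ 1 / 2 := by rw [hδdef]; linarith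
  have h2δ : s₁ = 2 * δ := by rw [hδdef]; ring
  -- choose M
  have htend : Tendsto (fun m : ℕ => (d : ℝ) * (g m / m) + ((d : ℝ) * (1 + ℓ)) / m)
      atTop (𝓝 0) := by
    have h1 := hgc.g_small.const_mul (d : ℝ)
    have h2 := tendsto_const_div_atTop_nhds_zero_nat ((d : ℝ) * (1 + ℓ))
    simpa using h1.add h2
  have hevM : ∀ᶠ m : ℕ in atTop,
      (d : ℝ) * (g m / m) + ((d : ℝ) * (1 + ℓ)) / m < δ :=
    htend.eventually_lt_const hδpos
  obtain ⟨M₀, hM₀⟩ := Filter.eventually_atTop.1 (hevM.and (Filter.eventually_ge_atTop 1))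
  refine ⟨M₀, fun m hm => ?_⟩
  obtain ⟨hAm, hm1⟩ := hM₀ m hm
  have hm0 : 0 < m := hm1
  have hgm0 : 0 ≤ g m := hgc.g_nonneg m
  set L : ℕ := Lspacing g ℓ m with hLdef
  have hLval : L = m + ⌈g m⌉₊ + ℓ := rfl
  have hL0 : 0 < L := by omega
  have hmL : m ≤ L := by omega
  set N : ℕ := L * (⌈(d : ℝ) / δ⌉₊ + 1) with hNdef
  refine ⟨N, fun n hn => ?_⟩
  set k : ℕ := kmn g ℓ m n with hkdef
  have hkval : k = n / L := rfl
  have hkL : k * L ≤ n := by rw [hkval]; exact Nat.div_mul_le_self n L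
  have hLN : L ≤ N := by rw [hNdef]; exact Nat.le_mul_of_pos_right L (Nat.succ_pos _)
  have hLn : L ≤ n := hLN.trans hn
  have hk1 : 1 ≤ k := by rw [hkval]; exact (Nat.one_le_div_iff hL0).2 hLn
  have hn0 : 0 < n := lt_of_lt_of_le hL0 hLn
  have hnkL : n < k * L + L := by
    have h1 := Nat.div_add_mod n L
    have h2 := Nat.mod_lt n hL0
    rw [hkval, mul_comm]
    omega
  -- the grid
  set J : Finset (Fin d → Fin k) := Finset.univ with hJdef
  set a : (Fin d → Fin k) → ZLat d := gridPt L ℓ k with hadef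
  set B : (Fin d → Fin k) → Finset (ZLat d) := fun j => box d (a j) m with hBdef
  have hKcard : Fintype.card (Fin d → Fin k) = k ^ d := by
    simp [Fintype.card_fun]
  have hgmG : g m ≤ (⌈g m⌉₊ : ℝ) := Nat.le_ceil _
  have hsep : ∀ j ∈ J, ∀ j' ∈ J, j ≠ j' → ∀ x ∈ box d (a j) m, ∀ w ∈ box d (a j') m,
      g m < supdist x w := by
    intro j _ j' _ hne x hx w hw
    have h := grid_sep (⌈g m⌉₊) m ℓ k hℓ j j' hne x w hx hw
    linarith
  have hdisjB : (J : Set (Fin d → Fin k)).PairwiseDisjoint B := by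
    intro j _ j' _ hne
    refine Finset.disjoint_left.2 fun {x} hx hx' => ?_
    have h := hsep j (Finset.mem_univ j) j' (Finset.mem_univ j') hne x hx x hx'
    rw [supdist_self] at h
    linarith
  have hUsub : J.biUnion B ⊆ box d 0 n :=
    Finset.biUnion_subset.2 fun j _ => grid_box_sub (⌈g m⌉₊) m ℓ n k hℓ hk1 hkL j
  have hUcard : (J.biUnion B).card = k ^ d * m ^ d := by
    rw [Finset.card_biUnion (fun x hx y hy hxy => hdisjB hx hy hxy)]
    simp only [hBdef, card_box]
    rw [Finset.sum_const, Finset.card_univ, hKcard, smul_eq_mul]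
  have hkmn_le : k ^ d * m ^ d ≤ n ^ d := by
    calc k ^ d * m ^ d = (J.biUnion B).card := hUcard.symm
      _ ≤ (box d 0 n).card := Finset.card_le_card hUsub
      _ = n ^ d := card_box 0 n
  set Rst : Finset (ZLat d) := box d 0 n \ J.biUnion B with hRstdef
  have hRcardN : Rst.card = n ^ d - k ^ d * m ^ d := by
    rw [hRstdef, Finset.card_sdiff_of_subset hUsub, card_box, hUcard]
  have hkmlt : k * m < n := by
    have hmLlt : m < L := by omega
    calc k * m < k * L := mul_lt_mul_of_pos_left hmLlt hk1
      _ ≤ n := hkL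
  have hkmd_lt : k ^ d * m ^ d < n ^ d := by
    rw [← Nat.mul_pow]
    exact Nat.pow_lt_pow_left hkmlt hd.ne'
  have hRpos : 0 < Rst.card := by rw [hRcardN]; omega
  -- events
  set img1 : Set Y := (fun v => y + v) '' ((1 - ε) • V) with himg1def
  set imgV : Set Y := (fun v => y + v) '' V with himgVdef
  have h1ε : (1 : ℝ) - ε ≠ 0 := by linarith
  have himg1o : IsOpen img1 := (Homeomorph.addLeft y).isOpenMap _ (hVo.smul₀ h1ε)
  have himg1c : Convex ℝ img1 := (hVc.smul _).translate y
  set D : ∀ j : Fin d → Fin k, Set (↥(box d (a j) m) → Y) :=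
    fun j => {f | ((box d (a j) m).card : ℝ)⁻¹ • ∑ w, f w ∈ img1} with hDdef
  have havgcont : ∀ j, Continuous fun f : ↥(box d (a j) m) → Y =>
      ((box d (a j) m).card : ℝ)⁻¹ • ∑ w, f w := fun j =>
    (continuous_finset_sum Finset.univ fun w _ => continuous_apply w).const_smul _
  have hDo : ∀ j, IsOpen (D j) := fun j => himg1o.preimage (havgcont j)
  have hDc : ∀ j, Convex ℝ (D j) := by
    intro j
    refine himg1c.is_linear_preimage ⟨fun f f' => ?_, fun r f => ?_⟩
    · simp only [Pi.add_apply]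
      rw [Finset.sum_add_distrib, smul_add]
    · simp only [Pi.smul_apply]
      rw [← Finset.smul_sum, smul_comm]
  have hAset : ∀ j, {ξ : Cfg d Y | (fun w : ↥(box d (a j) m) => ξ w.1) ∈ D j}
      = {ξ : Cfg d Y | mAvg (box d (a j) m) ξ ∈ img1} := by
    intro j
    ext ξ
    simp only [hDdef, Set.mem_setOf_eq, mAvg, Finset.sum_coe_sort]
  set Pm := μ {ξ : Cfg d Y | mAvg (box d 0 m) ξ ∈ img1} with hPmdef
  set Pn := μ {ξ : Cfg d Y | mAvg (box d 0 n) ξ ∈ imgV} with hPndef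
  have hPmj : ∀ j, μ {ξ : Cfg d Y | (fun w : ↥(box d (a j) m) => ξ w.1) ∈ D j} = Pm := by
    intro j
    rw [hAset j]
    exact avg_translate μ ℓ hinv (a j) (fun i => gridPt_dvd L ℓ k j i) m img1
      himg1o.measurableSet
  -- measure chain
  have step1 := cadi_iter μ g c hcadi m hm0 J a D hDo hDc hsep
  have hJcard : J.card = k ^ d := by rw [hJdef, Finset.card_univ, hKcard]
  have hprod : ∏ j ∈ J, μ {ξ : Cfg d Y | (fun w : ↥(box d (a j) m) => ξ w.1) ∈ D j}
      = Pm ^ (k ^ d) := by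
    rw [Finset.prod_congr rfl fun j _ => hPmj j, Finset.prod_const, hJcard]
  have hcomb := combD_event_eq J B D (J.biUnion B)
    (fun j hj => Finset.subset_biUnion_of_mem B hj)
  have step2 := cl_iter μ t α hcl V hVo hVc hV0 htV.ne' hα0.le (J.biUnion B)
    (combD J B D (J.biUnion B))
    (combD_isOpen J B D _ fun j _ => hDo j)
    (combD_convex J B D _ fun j _ => hDc j)
    Rst (fun z hz => (Finset.mem_sdiff.1 hz).2)
  -- ρ facts
  set ρ : ℝ := rhomn d g ℓ m n with hρdef
  have hρval2 : ρ = 1 - ((k : ℝ) ^ d * (m : ℝ) ^ d) / (n : ℝ) ^ d := rfl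
  have hρval : ρ = ((Rst.card : ℕ) : ℝ) / (n : ℝ) ^ d := by
    rw [hρval2, hRcardN, Nat.cast_sub hkmn_le]
    push_cast
    field_simp
  -- Bernoulli bound : ρ ≤ s₁
  have hρs : ρ ≤ s₁ := by
    set x1 : ℝ := (m : ℝ) / L with hx1def
    set x2 : ℝ := ((k : ℝ) * L) / n with hx2def
    have hLr : (0 : ℝ) < L := by positivity
    have hnr : (0 : ℝ) < n := by positivity
    have hmr : (0 : ℝ) < m := by positivity
    have hx10 : 0 ≤ x1 := by positivity
    have hx20 : 0 ≤ x2 := by positivity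
    have hx11 : x1 ≤ 1 := by
      rw [hx1def, div_le_one hLr]
      exact_mod_cast hmL
    have hx21 : x2 ≤ 1 := by
      rw [hx2def, div_le_one hnr]
      exact_mod_cast hkL
    have hb1 : 1 + (d : ℝ) * (x1 - 1) ≤ x1 ^ d := by
      have := one_add_mul_le_pow (a := x1 - 1) (by linarith) d
      simpa using this
    have hb2 : 1 + (d : ℝ) * (x2 - 1) ≤ x2 ^ d := by
      have := one_add_mul_le_pow (a := x2 - 1) (by linarith) d
      simpa using this
    have hA1 : (d : ℝ) * (1 - x1) ≤ δ := by
      have hval : 1 - x1 = ((⌈g m⌉₊ : ℝ) + ℓ) / L := by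
        rw [hx1def, hLval]
        push_cast
        field_simp
        ring
      have hceil : (⌈g m⌉₊ : ℝ) ≤ g m + 1 := (Nat.ceil_lt_add_one hgm0).le
      calc (d : ℝ) * (1 - x1) = d * (((⌈g m⌉₊ : ℝ) + ℓ) / L) := by rw [hval]
        _ ≤ d * ((g m + 1 + ℓ) / m) := by
            gcongr
            all_goals first
              | linarith
              | exact_mod_cast hmL
        _ = (d : ℝ) * (g m / m) + ((d : ℝ) * (1 + ℓ)) / m := by field_simp; ring
        _ ≤ δ := hAm.le
    have hB1 : (d : ℝ) * (1 - x2) ≤ δ := by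
      have hval2 : 1 - x2 = ((n : ℝ) - k * L) / n := by
        rw [hx2def]
        field_simp
      have h1 : (n : ℝ) - k * L ≤ L := by
        have : (n : ℝ) < k * L + L := by exact_mod_cast hnkL
        linarith
      calc (d : ℝ) * (1 - x2) = d * (((n : ℝ) - k * L) / n) := by rw [hval2]
        _ ≤ d * ((L : ℝ) / n) := by gcongr
        _ = ((d : ℝ) * L) / n := by ring
        _ ≤ δ := by
            rw [div_le_iff₀ hnr]
            have hq : (d : ℝ) / δ ≤ (⌈(d : ℝ) / δ⌉₊ : ℝ) + 1 := by
              have := Nat.le_ceil ((d : ℝ) / δ)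
              linarith
            have hd2 : (d : ℝ) ≤ δ * ((⌈(d : ℝ) / δ⌉₊ : ℝ) + 1) := by
              rw [div_le_iff₀ hδpos] at hq
              linarith
            have hNn : (N : ℝ) ≤ n := by exact_mod_cast hn
            have hNval : (N : ℝ) = L * ((⌈(d : ℝ) / δ⌉₊ : ℝ) + 1) := by
              rw [hNdef]; push_cast; ring
            nlinarith
    have hAd : 0 ≤ (d : ℝ) * (1 - x1) := by
      have : 0 ≤ 1 - x1 := by linarith
      positivity
    have hBd : 0 ≤ (d : ℝ) * (1 - x2) := by
      have : 0 ≤ 1 - x2 := by linarith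
      positivity
    have hprod2 : (1 - (d : ℝ) * (1 - x1)) * (1 - (d : ℝ) * (1 - x2)) ≤ x1 ^ d * x2 ^ d := by
      have e1 : 1 - (d : ℝ) * (1 - x1) ≤ x1 ^ d := by linarith
      have e2 : 1 - (d : ℝ) * (1 - x2) ≤ x2 ^ d := by linarith
      have hnn : 0 ≤ 1 - (d : ℝ) * (1 - x2) := by linarith
      exact mul_le_mul e1 e2 hnn (by positivity)
    have hxx : x1 ^ d * x2 ^ d = ((k : ℝ) ^ d * (m : ℝ) ^ d) / (n : ℝ) ^ d := by
      rw [← mul_pow, hx1def, hx2def,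
        show (m : ℝ) / L * ((k : ℝ) * L / n) = ((k : ℝ) * m) / n by field_simp,
        div_pow, mul_pow]
    rw [hρval2]
    nlinarith [mul_nonneg hAd hBd]
  -- hcond
  have htV1σ : (0 : ℝ) < t V + 1 / σ := by positivity
  have hcond : (((Rst.card : ℕ) : ℝ) / (n : ℝ) ^ d) * (t V + 1 / σ) ≤ ε := by
    rw [← hρval]
    calc ρ * (t V + 1 / σ) ≤ s₁ * (t V + 1 / σ) :=
          mul_le_mul_of_nonneg_right hρs htV1σ.le
      _ ≤ (ε / (t V + 1 / σ)) * (t V + 1 / σ) :=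
          mul_le_mul_of_nonneg_right (min_le_left _ _) htV1σ.le
      _ = ε := div_mul_cancel₀ ε htV1σ.ne'
  -- inclusion
  have hincl : {ξ : Cfg d Y | (∀ z ∈ Rst, ξ z ∈ (t V • V : Set Y))
      ∧ (fun w : ↥(J.biUnion B) => ξ w.1) ∈ combD J B D (J.biUnion B)}
      ⊆ {ξ : Cfg d Y | mAvg (box d 0 n) ξ ∈ imgV} := by
    rintro ξ ⟨hrest, hblocks⟩
    have hb : ∀ j ∈ J, (fun w : ↥(box d (a j) m) => ξ w.1) ∈ D j :=
      (Set.ext_iff.1 hcomb ξ).1 hblocks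
    have hb2 : ∀ j : Fin d → Fin k, mAvg (B j) ξ ∈ img1 := fun j =>
      (Set.ext_iff.1 (hAset j) ξ).1 (hb j (Finset.mem_univ j))
    have hBcard' : ∀ j : Fin d → Fin k, ((B j).card : ℝ) = (m : ℝ) ^ d := by
      intro j
      show (((box d (a j) m).card : ℕ) : ℝ) = (m : ℝ) ^ d
      rw [card_box]
      push_cast
      ring
    have hK' : 0 < Fintype.card (Fin d → Fin k) := by
      rw [hKcard]; positivity
    have hRcardR : ((Rst.card : ℕ) : ℝ)
        = (n : ℝ) ^ d - (Fintype.card (Fin d → Fin k)) * (m : ℝ) ^ d := by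
      rw [hRcardN, Nat.cast_sub hkmn_le, hKcard]
      push_cast
      ring
    exact geom_incl V hVc hV0 y ε σ (t V) hε0 hε1 hσ hσy htV n m hn0 hm0 B
      hUsub hdisjB hBcard' hK' hRpos hRcardR hcond ξ hb2 hrest
  have chain : ENNReal.ofReal (α V ^ Rst.card)
      * (ENNReal.ofReal (Real.exp (-(J.card * c m))) * Pm ^ (k ^ d)) ≤ Pn := by
    calc ENNReal.ofReal (α V ^ Rst.card)
          * (ENNReal.ofReal (Real.exp (-(J.card * c m))) * Pm ^ (k ^ d))
        = ENNReal.ofReal (α V ^ Rst.card) * (ENNReal.ofReal (Real.exp (-(J.card * c m)))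
            * ∏ j ∈ J, μ {ξ : Cfg d Y | (fun w : ↥(box d (a j) m) => ξ w.1) ∈ D j}) := by
          rw [hprod]
      _ ≤ ENNReal.ofReal (α V ^ Rst.card)
            * μ {ξ : Cfg d Y | ∀ j ∈ J, (fun w : ↥(box d (a j) m) => ξ w.1) ∈ D j} :=
          mul_le_mul_right step1 _
      _ = ENNReal.ofReal (α V ^ Rst.card)
            * μ {ξ : Cfg d Y | (fun w : ↥(J.biUnion B) => ξ w.1) ∈ combD J B D (J.biUnion B)} := by
          rw [hcomb]
      _ ≤ μ {ξ : Cfg d Y | (∀ z ∈ Rst, ξ z ∈ (t V • V : Set Y))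
            ∧ (fun w : ↥(J.biUnion B) => ξ w.1) ∈ combD J B D (J.biUnion B)} := step2
      _ ≤ Pn := measure_mono hincl
  -- endgame
  rw [card_box (0 : ZLat d) m, card_box (0 : ZLat d) n]
  by_cases hPm0 : Pm = 0
  · rw [hPm0, ENNReal.log_zero]
    rw [EReal.mul_bot_of_pos (EReal.coe_pos.2 (by positivity)), EReal.bot_add]
    exact bot_le
  · have hPmtop : Pm ≠ ⊤ := measure_ne_top μ _
    set p : ℝ := Pm.toReal with hpdef
    have hp0 : 0 < p := ENNReal.toReal_pos hPm0 hPmtop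
    have hp1 : p ≤ 1 := by
      rw [hpdef]
      calc Pm.toReal ≤ (1 : ENNReal).toReal := ENNReal.toReal_mono ENNReal.one_ne_top prob_le_one
        _ = 1 := by simp
    set lower : ℝ := α V ^ Rst.card * Real.exp (-((k ^ d : ℕ) * c m)) * p ^ (k ^ d)
      with hlowdef
    have hlowpos : 0 < lower := by positivity
    have hofReal : ENNReal.ofReal lower
        = ENNReal.ofReal (α V ^ Rst.card)
          * (ENNReal.ofReal (Real.exp (-(J.card * c m))) * Pm ^ (k ^ d)) := by
      rw [hlowdef, hJcard, ENNReal.ofReal_mul (by positivity),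
        ENNReal.ofReal_mul (by positivity), ENNReal.ofReal_pow hp0.le,
        ENNReal.ofReal_toReal hPmtop, mul_assoc]
    have hlb : ENNReal.ofReal lower ≤ Pn := by rw [hofReal]; exact chain
    have hlogPn : ((Real.log lower : ℝ) : EReal) ≤ ENNReal.log Pn := by
      have h := ENNReal.log_monotone hlb
      rwa [ENNReal.log_ofReal_of_pos hlowpos] at h
    have hlogPm : ENNReal.log Pm = ((Real.log p : ℝ) : EReal) := by
      rw [ENNReal.log]
      simp [hPm0, hPmtop]
      rfl
    -- real inequality
    have hkd_le : ((k : ℝ) ^ d) * ((m : ℝ) ^ d) ≤ (n : ℝ) ^ d := by exact_mod_cast hkmn_le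
    have hmdpos : (0 : ℝ) < (m : ℝ) ^ d := by positivity
    have hndpos : (0 : ℝ) < (n : ℝ) ^ d := by positivity
    have hlogp0 : Real.log p ≤ 0 := Real.log_nonpos hp0.le hp1
    have hlogα0 : Real.log (α V) ≤ 0 := Real.log_nonpos hα0.le hα1
    have hcm0 : 0 ≤ c m := hgc.c_nonneg m
    have hf2 : ((n : ℝ) ^ d)⁻¹ * (k : ℝ) ^ d ≤ ((m : ℝ) ^ d)⁻¹ := by
      have h : (k : ℝ) ^ d / (n : ℝ) ^ d ≤ 1 / (m : ℝ) ^ d := by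
        rw [div_le_div_iff₀ hndpos hmdpos]
        nlinarith
      calc ((n : ℝ) ^ d)⁻¹ * (k : ℝ) ^ d = (k : ℝ) ^ d / (n : ℝ) ^ d := by ring
        _ ≤ 1 / (m : ℝ) ^ d := h
        _ = ((m : ℝ) ^ d)⁻¹ := one_div _
    have hloglower : Real.log lower
        = (Rst.card : ℝ) * Real.log (α V) - ((k : ℝ) ^ d) * c m
          + ((k : ℝ) ^ d) * Real.log p := by
      rw [hlowdef, Real.log_mul (by positivity) (by positivity),
        Real.log_mul (by positivity) (by positivity), Real.log_pow, Real.log_pow,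
        Real.log_exp]
      push_cast
      ring
    have hg1 : ((m : ℝ) ^ d)⁻¹ * Real.log p
        ≤ ((n : ℝ) ^ d)⁻¹ * ((k : ℝ) ^ d * Real.log p) := by
      have h := mul_le_mul_of_nonpos_right hf2 hlogp0
      calc ((m : ℝ) ^ d)⁻¹ * Real.log p
          ≤ (((n : ℝ) ^ d)⁻¹ * (k : ℝ) ^ d) * Real.log p := h
        _ = ((n : ℝ) ^ d)⁻¹ * ((k : ℝ) ^ d * Real.log p) := by ring
    have hg2 : ((n : ℝ) ^ d)⁻¹ * ((k : ℝ) ^ d * c m) ≤ ((m : ℝ) ^ d)⁻¹ * c m := by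
      have h := mul_le_mul_of_nonneg_right hf2 hcm0
      calc ((n : ℝ) ^ d)⁻¹ * ((k : ℝ) ^ d * c m)
          = (((n : ℝ) ^ d)⁻¹ * (k : ℝ) ^ d) * c m := by ring
        _ ≤ ((m : ℝ) ^ d)⁻¹ * c m := h
    have he1 : ((n : ℝ) ^ d)⁻¹ * ((Rst.card : ℝ) * Real.log (α V))
        = ρ * Real.log (α V) := by
      rw [hρval]; ring
    have hreal : ((m ^ d : ℕ) : ℝ)⁻¹ * Real.log p
        + (-c m / ((m ^ d : ℕ) : ℝ) + ρ * Real.log (α V))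
        ≤ ((n ^ d : ℕ) : ℝ)⁻¹ * Real.log lower := by
      rw [hloglower]
      push_cast
      have hdiv : -c m / ((m : ℝ) ^ d) = -(((m : ℝ) ^ d)⁻¹ * c m) := by ring
      linarith [hg1, hg2, he1]
    rw [hlogPm, ← EReal.coe_mul, ← EReal.coe_add]
    refine le_trans (EReal.coe_le_coe_iff.2 hreal) ?_
    rw [EReal.coe_mul]
    exact mul_le_mul_of_nonneg_left hlogPn (EReal.coe_nonneg.2 (by positivity))
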